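/- Let T be a finite nonabelian simple group, and identify the index set of the construction of Γ(T) with T itself (so k = |T| and t_i = i for i ∈ T). Thus the vertex set V of Γ(T) consists of the right cosets Df of the diagonal subgroup D = {constant functions} in the group T^T of all functions T → T under pointwise multiplication, with Df → Df' if and only if f'·f⁻¹ ∈ D·ι·D, where ι : T → T is the identity function. Let M ≤ Sym(V) be the group of all right multiplications Df ↦ D(fm) for m ∈ T^T, and for each t ∈ T let λ(t) ∈ Sym(V) be the permutation Df ↦ D(f ∘ ℓ_t), where ℓ_t : T → T is left multiplication by t. Then H = ⟨M, λ(t) : t ∈ T⟩ is a group of automorphisms of Γ(T), and Γ(T) is (H,2)-arc-transitive. -/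

import Mathlib

open scoped Pointwise

/-- An `s`-arc of the digraph `(V, r)`. -/
def IsSArc {V : Type*} (r : V → V → Prop) (s : ℕ) (v : ℕ → V) : Prop :=
  ∀ i < s, r (v i) (v (i + 1))

/-- The digraph `(V, r)` is `(G, s)`-arc-transitive. -/
def ArcTrans {V : Type*} (r : V → V → Prop) (G : Subgroup (Equiv.Perm V)) (s : ℕ) : Prop :=
  ∀ v w : ℕ → V, IsSArc r s v → IsSArc r s w → ∃ g ∈ G, ∀ i ≤ s, g (v i) = w i

/-- The full diagonal subgroup `{(t,…,t) : t ∈ T}` of the direct power `ι → T`. -/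
def diagSubgroup (ι : Type*) (T : Type*) [Group T] : Subgroup (ι → T) where
  carrier := {f | ∃ t : T, f = fun _ => t}
  one_mem' := ⟨1, rfl⟩
  mul_mem' := by rintro a b ⟨s, rfl⟩ ⟨t, rfl⟩; exact ⟨s * t, rfl⟩
  inv_mem' := by rintro a ⟨t, rfl⟩; exact ⟨t⁻¹, rfl⟩

/-- The arc relation of the coset digraph `Cos(G,H,g)`. -/
def cosArc {G : Type*} [Group G] (H : Subgroup G) (g : G)
    (A B : Quotient (QuotientGroup.rightRel H)) : Prop :=
  ∃ x y : G, Quotient.mk (QuotientGroup.rightRel H) x = A ∧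
    Quotient.mk (QuotientGroup.rightRel H) y = B ∧
    y * x⁻¹ ∈ (H : Set G) * {g} * (H : Set G)

/-- Right multiplication by `a ∈ G` as a permutation of the right cosets of `H`:
`Hx ↦ Hxa`. -/
def rmulPerm {G : Type*} [Group G] (H : Subgroup G) (a : G) :
    Equiv.Perm (Quotient (QuotientGroup.rightRel H)) where
  toFun := Quotient.map' (fun x => x * a) (by
    intro x y h
    rw [QuotientGroup.rightRel_apply] at h ⊢
    have e : y * a * (x * a)⁻¹ = y * x⁻¹ := by group
    rw [e]; exact h)
  invFun := Quotient.map' (fun x => x * a⁻¹) (by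
    intro x y h
    rw [QuotientGroup.rightRel_apply] at h ⊢
    have e : y * a⁻¹ * (x * a⁻¹)⁻¹ = y * x⁻¹ := by group
    rw [e]; exact h)
  left_inv := by
    intro q
    refine Quotient.inductionOn' q ?_
    intro x
    simp [Quotient.map'_mk'']
  right_inv := by
    intro q
    refine Quotient.inductionOn' q ?_
    intro x
    simp [Quotient.map'_mk'']

/-- The permutation `λ(t)` of the vertex set of `Γ(T)` (with index set identified with
`T`): `Df ↦ D(f ∘ ℓ_t)` where `ℓ_t` is left multiplication by `t` on `T`. -/
def lcompPerm {T : Type*} [Group T] (t : T) :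
    Equiv.Perm (Quotient (QuotientGroup.rightRel (diagSubgroup T T))) where
  toFun := Quotient.map' (fun f => f ∘ (fun x => t * x)) (by
    intro f f' h
    rw [QuotientGroup.rightRel_apply] at h ⊢
    obtain ⟨c, hc⟩ : ∃ c : T, f' * f⁻¹ = fun _ => c := h
    exact ⟨c, funext fun x => congrFun hc (t * x)⟩)
  invFun := Quotient.map' (fun f => f ∘ (fun x => t⁻¹ * x)) (by
    intro f f' h
    rw [QuotientGroup.rightRel_apply] at h ⊢
    obtain ⟨c, hc⟩ : ∃ c : T, f' * f⁻¹ = fun _ => c := h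
    exact ⟨c, funext fun x => congrFun hc (t⁻¹ * x)⟩)
  left_inv := by
    intro q
    refine Quotient.inductionOn' q ?_
    intro f
    simp only [Quotient.map'_mk'']
    congr 1
    funext x
    simp [Function.comp, mul_inv_cancel_left]
  right_inv := by
    intro q
    refine Quotient.inductionOn' q ?_
    intro f
    simp only [Quotient.map'_mk'']
    congr 1
    funext x
    simp [Function.comp, inv_mul_cancel_left]


section Aux

variable {T : Type*} [Group T]

private def mkD (f : T → T) : Quotient (QuotientGroup.rightRel (diagSubgroup T T)) :=
  Quotient.mk _ f

private lemma mkD_eq_mkD {f g : T → T} :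
    mkD f = mkD g ↔ ∃ c : T, ∀ z, g z = c * f z := by
  constructor
  · intro h
    have h2 : (QuotientGroup.rightRel (diagSubgroup T T)) f g := Quotient.exact h
    rw [QuotientGroup.rightRel_apply] at h2
    have h3 : ∃ t : T, g * f⁻¹ = fun _ => t := h2
    obtain ⟨c, hc⟩ := h3
    refine ⟨c, fun z => ?_⟩
    have := congrFun hc z
    simp only [Pi.mul_apply, Pi.inv_apply] at this
    calc g z = g z * (f z)⁻¹ * f z := by group
    _ = c * f z := by rw [this]
  · rintro ⟨c, hc⟩
    refine Quotient.sound (QuotientGroup.rightRel_apply.mpr ?_)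
    show ∃ t : T, g * f⁻¹ = fun _ => t
    refine ⟨c, funext fun z => ?_⟩
    simp only [Pi.mul_apply, Pi.inv_apply, hc z]
    group

private lemma memS {z : T → T} :
    z ∈ ((diagSubgroup T T : Set (T → T)) * {fun x => x} * (diagSubgroup T T : Set (T → T)))
      ↔ ∃ a b : T, ∀ x, z x = a * x * b := by
  constructor
  · intro hz
    rw [Set.mem_mul] at hz
    obtain ⟨p, hp, q, hq, rfl⟩ := hz
    rw [Set.mem_mul] at hp
    obtain ⟨d, hd, i, hi, rfl⟩ := hp
    obtain ⟨a, rfl⟩ : ∃ t : T, d = fun _ => t := hd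
    obtain ⟨b, rfl⟩ : ∃ t : T, q = fun _ => t := hq
    rw [Set.mem_singleton_iff] at hi
    subst hi
    exact ⟨a, b, fun x => rfl⟩
  · rintro ⟨a, b, h⟩
    have : z = ((fun _ => a) * (fun x => x)) * (fun _ => b) := by
      funext x
      simpa using h x
    rw [this]
    exact Set.mul_mem_mul (Set.mul_mem_mul ⟨a, rfl⟩ rfl) ⟨b, rfl⟩

private lemma cosArc_mk {f g : T → T} :
    cosArc (diagSubgroup T T) (fun x => x) (mkD f) (mkD g) ↔
      ∃ a b : T, ∀ z, g z = a * z * b * f z := by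
  constructor
  · rintro ⟨x, y, hx, hy, hm⟩
    obtain ⟨a, b, hab⟩ := memS.mp hm
    obtain ⟨c, hc⟩ := mkD_eq_mkD.mp hx
    obtain ⟨d, hd⟩ := mkD_eq_mkD.mp hy
    refine ⟨d * a, b * c⁻¹, fun z => ?_⟩
    have h1 := hab z
    simp only [Pi.mul_apply, Pi.inv_apply] at h1
    have hyz : y z = a * z * b * x z := by
      calc y z = y z * (x z)⁻¹ * x z := by group
      _ = a * z * b * x z := by rw [h1]
    have hxz : x z = c⁻¹ * f z := by
      rw [hc z]; group
    rw [hd z, hyz, hxz]; group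
  · rintro ⟨a, b, h⟩
    refine ⟨f, g, rfl, rfl, memS.mpr ⟨a, b, fun z => ?_⟩⟩
    simp only [Pi.mul_apply, Pi.inv_apply, h z]
    group

private lemma rmul_mk (m f : T → T) :
    rmulPerm (diagSubgroup T T) m (mkD f) = mkD (f * m) := rfl

private lemma lcomp_mk (u : T) (f : T → T) :
    lcompPerm u (mkD f) = mkD (f ∘ fun x => u * x) := rfl

end Aux

section Main

variable {T : Type*} [Group T]

private lemma arc_pres :
    ∀ h ∈ Subgroup.closure
        ({π | ∃ m : T → T, π = rmulPerm (diagSubgroup T T) m} ∪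
          {π | ∃ u : T, π = lcompPerm u}),
      ∀ A B, cosArc (diagSubgroup T T) (fun x => x) A B ↔
        cosArc (diagSubgroup T T) (fun x => x) (h A) (h B) := by
  intro h hh
  induction hh using Subgroup.closure_induction with
  | mem π hπ =>
    rcases hπ with ⟨m, rfl⟩ | ⟨u, rfl⟩
    · intro A B
      refine Quotient.inductionOn₂' A B ?_
      intro f g
      show cosArc _ _ (mkD f) (mkD g) ↔ cosArc _ _ (rmulPerm _ m (mkD f)) (rmulPerm _ m (mkD g))
      rw [rmul_mk, rmul_mk, cosArc_mk, cosArc_mk]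
      constructor
      · rintro ⟨a, b, hab⟩
        refine ⟨a, b, fun z => ?_⟩
        simp only [Pi.mul_apply, hab z]
        group
      · rintro ⟨a, b, hab⟩
        refine ⟨a, b, fun z => ?_⟩
        have := hab z
        simp only [Pi.mul_apply] at this
        rw [← mul_assoc] at this
        exact mul_right_cancel this
    · intro A B
      refine Quotient.inductionOn₂' A B ?_
      intro f g
      show cosArc _ _ (mkD f) (mkD g) ↔ cosArc _ _ (lcompPerm u (mkD f)) (lcompPerm u (mkD g))
      rw [lcomp_mk, lcomp_mk, cosArc_mk, cosArc_mk]
      constructor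
      · rintro ⟨a, b, hab⟩
        refine ⟨a * u, b, fun z => ?_⟩
        simp only [Function.comp_apply, hab (u * z)]
        group
      · rintro ⟨a, b, hab⟩
        refine ⟨a * u⁻¹, b, fun z => ?_⟩
        have := hab (u⁻¹ * z)
        simp only [Function.comp_apply, mul_inv_cancel_left] at this
        rw [this]
        group
  | one => intro A B; rfl
  | mul x y hx hy px py =>
    intro A B
    rw [Equiv.Perm.mul_apply, Equiv.Perm.mul_apply]
    exact (py A B).trans (px (y A) (y B))
  | inv x hx px =>
    intro A B
    have := px (x⁻¹ A) (x⁻¹ B)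
    rw [Equiv.Perm.coe_inv, Equiv.apply_symm_apply, Equiv.apply_symm_apply] at this
    exact this.symm

private lemma normArc (v : ℕ → Quotient (QuotientGroup.rightRel (diagSubgroup T T)))
    (hv : IsSArc (cosArc (diagSubgroup T T) (fun x => x)) 2 v) :
    ∃ g ∈ Subgroup.closure
        ({π | ∃ m : T → T, π = rmulPerm (diagSubgroup T T) m} ∪
          {π | ∃ u : T, π = lcompPerm u}),
      g (v 0) = mkD 1 ∧ g (v 1) = mkD (fun x => x) ∧ g (v 2) = mkD (fun x => x * x) := by
  have hf0 : mkD ((v 0).out) = v 0 := Quotient.out_eq _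
  have hf1 : mkD ((v 1).out) = v 1 := Quotient.out_eq _
  have hf2 : mkD ((v 2).out) = v 2 := Quotient.out_eq _
  set f0 := (v 0).out
  set f1 := (v 1).out
  set f2 := (v 2).out
  have h01 := hv 0 (by norm_num)
  have h12 := hv 1 (by norm_num)
  rw [← hf0, ← hf1] at h01
  rw [← hf1, ← hf2] at h12
  obtain ⟨a, b, hab⟩ := cosArc_mk.mp h01
  obtain ⟨p, q, hpq⟩ := cosArc_mk.mp h12
  set m : T → T := fun z => (f0 z)⁻¹ * b⁻¹ with hm
  set t : T := (q * a)⁻¹ with ht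
  refine ⟨lcompPerm t * rmulPerm (diagSubgroup T T) m,
    Subgroup.mul_mem _ (Subgroup.subset_closure (Or.inr ⟨t, rfl⟩))
      (Subgroup.subset_closure (Or.inl ⟨m, rfl⟩)), ?_, ?_, ?_⟩
  · rw [← hf0, Equiv.Perm.mul_apply, rmul_mk, lcomp_mk]
    refine (mkD_eq_mkD.mpr ⟨b⁻¹, fun z => ?_⟩).symm
    simp only [Function.comp_apply, Pi.mul_apply, hm, Pi.one_apply]
    group
  · rw [← hf1, Equiv.Perm.mul_apply, rmul_mk, lcomp_mk]
    refine (mkD_eq_mkD.mpr ⟨a * t, fun z => ?_⟩).symm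
    simp only [Function.comp_apply, Pi.mul_apply, hm, hab (t * z)]
    group
  · rw [← hf2, Equiv.Perm.mul_apply, rmul_mk, lcomp_mk]
    refine (mkD_eq_mkD.mpr ⟨p * t, fun z => ?_⟩).symm
    simp only [Function.comp_apply, Pi.mul_apply, hm, hpq (t * z), hab (t * z)]
    simp only [ht]
    group

end Main
/-- Identify the index set of Construction Γ(T) with `T` itself, so
that the vertex set `V` of `Γ(T)` consists of the right cosets of the diagonal subgroup
`D` in `T^T = (T → T)`, with `Df → Df'` iff `f'·f⁻¹ ∈ D·ι·D` where `ι` is the identity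
function.  Let `M` be the group of right multiplications and `λ(t)` the permutations
`Df ↦ D(f ∘ ℓ_t)`.  Then `H = ⟨M, λ(T)⟩` is a group of automorphisms of `Γ(T)`, and
`Γ(T)` is `(H,2)`-arc-transitive. -/
theorem stmt15 {T : Type*} [Group T] [Finite T]
    (hTsimple : IsSimpleGroup T) (hTnonab : ∃ a b : T, a * b ≠ b * a) :
    (∀ h ∈ Subgroup.closure
        ({π | ∃ m : T → T, π = rmulPerm (diagSubgroup T T) m} ∪
          {π | ∃ u : T, π = lcompPerm u}),
      ∀ A B, cosArc (diagSubgroup T T) (fun x => x) A B ↔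
        cosArc (diagSubgroup T T) (fun x => x) (h A) (h B)) ∧
    ArcTrans (cosArc (diagSubgroup T T) (fun x => x))
      (Subgroup.closure
        ({π | ∃ m : T → T, π = rmulPerm (diagSubgroup T T) m} ∪
          {π | ∃ u : T, π = lcompPerm u})) 2 := by
  
  refine ⟨arc_pres, ?_⟩
  intro v w hvarc hwarc
  obtain ⟨gv, hgv, hv0, hv1, hv2⟩ := normArc v hvarc
  obtain ⟨gw, hgw, hw0, hw1, hw2⟩ := normArc w hwarc
  refine ⟨gw⁻¹ * gv, mul_mem (inv_mem hgw) hgv, ?_⟩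
  intro i hi
  interval_cases i
  · rw [Equiv.Perm.mul_apply, hv0, ← hw0, Equiv.Perm.coe_inv, Equiv.symm_apply_apply]
  · rw [Equiv.Perm.mul_apply, hv1, ← hw1, Equiv.Perm.coe_inv, Equiv.symm_apply_apply]
  · rw [Equiv.Perm.mul_apply, hv2, ← hw2, Equiv.Perm.coe_inv, Equiv.symm_apply_apply]
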